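/- Scalar reduction for the two-expert hard class: Let X be uniformly distributed on [0,1], let w*(x) = β₂* + α*(x) Δ where Δ := β₁* − β₂* ∈ ℝ^J and α* : [0,1] → [0,1] is measurable. Let W^hard_M denote the class of functions w : [0,1] → ℝ^J constant on each cell of a partition of [0,1] into at most M intervals, and let S_M denote the class of scalar step functions g : [0,1] → ℝ constant on each cell of a partition of [0,1] into at most M intervals. Then inf_{w ∈ W^hard_M} E[‖w*(X) − w(X)‖₂²] = ‖Δ‖₂² · inf_{g ∈ S_M} E[(α*(X) − g(X))²]; that is, any component of a hard approximant orthogonal to Δ only increases the error, so the best M-interval hard approximation lies on the line segment direction spanned by β₁* − β₂*. -/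

import Mathlib

open MeasureTheory Set

/-- The class of `ℝ^J`-valued step functions constant on each cell of a partition
of `[0,1]` into at most `M` intervals. -/
def hardClass (J M : ℕ) : Set (ℝ → EuclideanSpace ℝ (Fin J)) :=
  {w | ∃ (t : Fin (M + 1) → ℝ) (c : Fin M → EuclideanSpace ℝ (Fin J)),
    Monotone t ∧ t 0 = 0 ∧ t (Fin.last M) = 1 ∧
    ∀ i : Fin M, ∀ x ∈ Set.Ico (t i.castSucc) (t i.succ), w x = c i}

/-- The class of real-valued step functions constant on each cell of a partition
of `[0,1]` into at most `M` intervals. -/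
def stepClass (M : ℕ) : Set (ℝ → ℝ) :=
  {g | ∃ (t : Fin (M + 1) → ℝ) (c : Fin M → ℝ),
    Monotone t ∧ t 0 = 0 ∧ t (Fin.last M) = 1 ∧
    ∀ i : Fin M, ∀ x ∈ Set.Ico (t i.castSucc) (t i.succ), g x = c i}


lemma exists_partition (M : ℕ) (hM : 1 ≤ M) :
    ∃ t : Fin (M + 1) → ℝ, Monotone t ∧ t 0 = 0 ∧ t (Fin.last M) = 1 := by
  refine ⟨fun i => if i = 0 then 0 else 1, ?_, by simp, ?_⟩
  · intro i j hij
    by_cases hi : i = 0 <;> by_cases hj : j = 0 <;> simp [hi, hj]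
    · exact absurd (le_antisymm (hj ▸ hij) (Fin.zero_le i)) hi
  · have : (Fin.last M) ≠ 0 := by
      simp [Fin.ext_iff, Fin.last]
      omega
    simp [this]

lemma cover_lemma {M : ℕ} (t : Fin (M + 1) → ℝ) (ht : Monotone t)
    (h0 : t 0 = 0) (h1 : t (Fin.last M) = 1) {x : ℝ} (hx : x ∈ Set.Ico (0:ℝ) 1) :
    ∃ i : Fin M, x ∈ Set.Ico (t i.castSucc) (t i.succ) := by
  classical
  set S : Finset (Fin (M + 1)) := Finset.univ.filter (fun i => t i ≤ x) with hS
  have hS0 : (0 : Fin (M+1)) ∈ S := by simp [hS, h0, hx.1]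
  have hSne : S.Nonempty := ⟨0, hS0⟩
  set i₀ := S.max' hSne with hi₀
  have hmem : i₀ ∈ S := S.max'_mem hSne
  have hle : t i₀ ≤ x := by simpa [hS] using hmem
  have hne : i₀ ≠ Fin.last M := by
    intro h
    rw [h, h1] at hle
    exact absurd hx.2 (not_lt.2 hle)
  obtain ⟨j, hj⟩ := Fin.exists_castSucc_eq.2 hne
  refine ⟨j, hj ▸ hle, ?_⟩
  by_contra hlt
  push_neg at hlt
  have : j.succ ∈ S := by simp [hS, hlt]
  have := S.le_max' _ this
  rw [← hi₀, ← hj] at this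
  exact absurd this (not_le.2 (by simp [Fin.lt_iff_val_lt_val]))

lemma cells_eq {M : ℕ} (t : Fin (M + 1) → ℝ) (ht : Monotone t)
    {i j : Fin M} {x : ℝ} (hi : x ∈ Set.Ico (t i.castSucc) (t i.succ))
    (hj : x ∈ Set.Ico (t j.castSucc) (t j.succ)) : i = j := by
  by_contra hne
  rcases lt_or_gt_of_ne hne with h | h
  · have : t i.succ ≤ t j.castSucc := ht (by simp [Fin.le_def]; omega)
    linarith [hi.2, hj.1]
  · have : t j.succ ≤ t i.castSucc := ht (by simp [Fin.le_def]; omega)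
    linarith [hi.1, hj.2]

lemma integrable_hard {J M : ℕ} (t : Fin (M + 1) → ℝ) (c : Fin M → EuclideanSpace ℝ (Fin J))
    (ht : Monotone t) (h0 : t 0 = 0) (h1 : t (Fin.last M) = 1)
    (w : ℝ → EuclideanSpace ℝ (Fin J))
    (hcell : ∀ i : Fin M, ∀ x ∈ Set.Ico (t i.castSucc) (t i.succ), w x = c i)
    (β₂ Δ : EuclideanSpace ℝ (Fin J)) (αs : ℝ → ℝ) (hαmeas : Measurable αs)
    (hα01 : ∀ x ∈ Set.Icc (0 : ℝ) 1, αs x ∈ Set.Icc (0 : ℝ) 1)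
    (wstar : ℝ → EuclideanSpace ℝ (Fin J))
    (hw : ∀ x, wstar x = β₂ + αs x • Δ) :
    Integrable (fun x => ‖wstar x - w x‖ ^ 2) (volume.restrict (Set.Icc (0:ℝ) 1)) := by
  classical
  set w' : ℝ → EuclideanSpace ℝ (Fin J) :=
    fun x => ∑ i : Fin M, (Set.Ico (t i.castSucc) (t i.succ)).indicator (fun _ => c i) x with hw'
  have hweq : ∀ x ∈ Set.Ico (0:ℝ) 1, w x = w' x := by
    intro x hx
    obtain ⟨i, hi⟩ := cover_lemma t ht h0 h1 hx
    rw [hcell i x hi, hw']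
    show c i = ∑ j : Fin M, (Set.Ico (t j.castSucc) (t j.succ)).indicator (fun _ => c j) x
    rw [Finset.sum_eq_single i]
    · simp [Set.indicator_of_mem hi]
    · intro j _ hji
      apply Set.indicator_of_notMem
      intro hj
      exact hji (cells_eq t ht hj hi)
    · simp
  have hwstarmeas : Measurable wstar := by
    have : Measurable (fun x => β₂ + αs x • Δ) := measurable_const.add (hαmeas.smul_const Δ)
    simpa [funext hw] using this
  have hw'meas : Measurable w' := by
    apply Finset.measurable_sum
    intro i _
    exact Measurable.indicator measurable_const measurableSet_Ico
  have hfmeas : Measurable (fun x => ‖wstar x - w' x‖ ^ 2) :=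
    ((hwstarmeas.sub hw'meas).norm).pow_const 2
  set C : ℝ := (‖β₂‖ + ‖Δ‖ + ∑ i : Fin M, ‖c i‖) ^ 2 with hC
  have hbound : ∀ x ∈ Set.Icc (0:ℝ) 1, ‖(fun x => ‖wstar x - w' x‖ ^ 2) x‖ ≤ C := by
    intro x hx
    have hα := hα01 x hx
    have h1' : ‖wstar x‖ ≤ ‖β₂‖ + ‖Δ‖ := by
      rw [hw]
      refine (norm_add_le _ _).trans ?_
      gcongr
      rw [norm_smul]
      have : |αs x| ≤ 1 := abs_le.2 ⟨by linarith [hα.1], hα.2⟩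
      calc ‖αs x‖ * ‖Δ‖ ≤ 1 * ‖Δ‖ := by
            apply mul_le_mul_of_nonneg_right _ (norm_nonneg _)
            simpa using this
        _ = ‖Δ‖ := one_mul _
    have h2' : ‖w' x‖ ≤ ∑ i : Fin M, ‖c i‖ := by
      refine (norm_sum_le _ _).trans ?_
      apply Finset.sum_le_sum
      intro i _
      exact norm_indicator_le_norm_self (fun _ => c i) x
    have h3 : ‖wstar x - w' x‖ ≤ ‖β₂‖ + ‖Δ‖ + ∑ i : Fin M, ‖c i‖ := by
      refine (norm_sub_le _ _).trans ?_
      linarith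
    have h4 : (0:ℝ) ≤ ‖wstar x - w' x‖ := norm_nonneg _
    rw [Real.norm_eq_abs, abs_of_nonneg (by positivity)]
    exact pow_le_pow_left₀ h4 h3 2
  have hint' : Integrable (fun x => ‖wstar x - w' x‖ ^ 2) (volume.restrict (Set.Icc (0:ℝ) 1)) := by
    refine Integrable.mono' (integrable_const C) hfmeas.aestronglyMeasurable ?_
    filter_upwards [ae_restrict_mem measurableSet_Icc] with x hx
    exact hbound x hx
  refine hint'.congr ?_
  have hone : (volume.restrict (Set.Icc (0:ℝ) 1)) {(1:ℝ)} = 0 := by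
    rw [Measure.restrict_apply (measurableSet_singleton 1)]
    exact measure_mono_null Set.inter_subset_left (Real.volume_singleton)
  have hne1 : ∀ᵐ x ∂(volume.restrict (Set.Icc (0:ℝ) 1)), x ≠ 1 := by
    rw [ae_iff]
    convert hone using 2
    ext x; simp
  filter_upwards [ae_restrict_mem measurableSet_Icc, hne1] with x hx hx1
  rw [hweq x ⟨hx.1, lt_of_le_of_ne hx.2 hx1⟩]

/-- **Scalar reduction for the two-expert hard class.** With `X ~ Unif[0,1]` and
`wstar x = β₂ + αs x • Δ`, `Δ = β₁ - β₂`, the best `M`-interval vector-valued hard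
approximation error equals `‖Δ‖²` times the best `M`-interval scalar step
approximation error of `αs`. -/
theorem scalar_reduction_two_expert_hard
    {J M : ℕ} (hM : 1 ≤ M)
    (β₁ β₂ Δ : EuclideanSpace ℝ (Fin J)) (hΔ : Δ = β₁ - β₂)
    (αs : ℝ → ℝ) (hαmeas : Measurable αs)
    (hα01 : ∀ x ∈ Set.Icc (0 : ℝ) 1, αs x ∈ Set.Icc (0 : ℝ) 1)
    (wstar : ℝ → EuclideanSpace ℝ (Fin J))
    (hw : ∀ x, wstar x = β₂ + αs x • Δ) :
    sInf ((fun w => ∫ x in Set.Icc (0 : ℝ) 1, ‖wstar x - w x‖ ^ 2) ''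
        hardClass J M)
      = ‖Δ‖ ^ 2 *
        sInf ((fun g => ∫ x in Set.Icc (0 : ℝ) 1, (αs x - g x) ^ 2) ''
          stepClass M) := by
  classical
  obtain ⟨t₀, ht₀m, ht₀0, ht₀1⟩ := exists_partition M hM
  have hconst_hard : ∀ v : EuclideanSpace ℝ (Fin J), (fun _ : ℝ => v) ∈ hardClass J M :=
    fun v => ⟨t₀, fun _ => v, ht₀m, ht₀0, ht₀1, fun _ _ _ => rfl⟩
  have hconst_step : ∀ v : ℝ, (fun _ : ℝ => v) ∈ stepClass M :=
    fun v => ⟨t₀, fun _ => v, ht₀m, ht₀0, ht₀1, fun _ _ _ => rfl⟩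
  set F : (ℝ → EuclideanSpace ℝ (Fin J)) → ℝ :=
    fun w => ∫ x in Set.Icc (0:ℝ) 1, ‖wstar x - w x‖ ^ 2 with hF
  set G : (ℝ → ℝ) → ℝ :=
    fun g => ∫ x in Set.Icc (0:ℝ) 1, (αs x - g x) ^ 2 with hG
  have hSne : (F '' hardClass J M).Nonempty := ⟨_, Set.mem_image_of_mem F (hconst_hard 0)⟩
  have hTne : (G '' stepClass M).Nonempty := ⟨_, Set.mem_image_of_mem G (hconst_step 0)⟩
  have hSbdd : BddBelow (F '' hardClass J M) := by
    refine ⟨0, ?_⟩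
    rintro v ⟨w, -, rfl⟩
    exact integral_nonneg fun x => sq_nonneg _
  have hTbdd : BddBelow (G '' stepClass M) := by
    refine ⟨0, ?_⟩
    rintro v ⟨g, -, rfl⟩
    exact integral_nonneg fun x => sq_nonneg _
  rcases eq_or_ne Δ 0 with hΔ0 | hΔ0
  · have hR : ‖Δ‖ ^ 2 = 0 := by simp [hΔ0]
    rw [hR, zero_mul]
    have h0mem : (0:ℝ) ∈ F '' hardClass J M := by
      refine ⟨fun _ => β₂, hconst_hard β₂, ?_⟩
      have hz : ∀ x : ℝ, ‖wstar x - β₂‖ ^ 2 = 0 := by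
        intro x; rw [hw]; simp [hΔ0]
      simp [hF, hz]
    refine le_antisymm (csInf_le hSbdd h0mem) ?_
    refine le_csInf hSne ?_
    rintro v ⟨w, -, rfl⟩
    exact integral_nonneg fun x => sq_nonneg _
  · have hpos : (0:ℝ) < ‖Δ‖ ^ 2 := pow_pos (norm_pos_iff.2 hΔ0) 2
    have key1 : ∀ g ∈ stepClass M, sInf (F '' hardClass J M) ≤ ‖Δ‖ ^ 2 * G g := by
      intro g hg
      obtain ⟨t, c, htm, ht0, ht1, hcell⟩ := hg
      set w : ℝ → EuclideanSpace ℝ (Fin J) := fun x => β₂ + g x • Δ with hwdef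
      have hwmem : w ∈ hardClass J M := by
        refine ⟨t, fun i => β₂ + c i • Δ, htm, ht0, ht1, ?_⟩
        intro i x hx
        show β₂ + g x • Δ = β₂ + c i • Δ
        rw [hcell i x hx]
      have hval : F w = ‖Δ‖ ^ 2 * G g := by
        have hptw : ∀ x : ℝ, ‖wstar x - w x‖ ^ 2 = ‖Δ‖ ^ 2 * (αs x - g x) ^ 2 := by
          intro x
          have h1 : wstar x - w x = (αs x - g x) • Δ := by
            rw [hw]
            show β₂ + αs x • Δ - (β₂ + g x • Δ) = (αs x - g x) • Δ
            rw [sub_smul]; abel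
          rw [h1, norm_smul, mul_pow, Real.norm_eq_abs, sq_abs]; ring
        rw [hF, hG]
        simp only [hptw]
        exact integral_const_mul _ _
      rw [← hval]
      exact csInf_le hSbdd ⟨w, hwmem, rfl⟩
    have key2 : ∀ w ∈ hardClass J M, ‖Δ‖ ^ 2 * sInf (G '' stepClass M) ≤ F w := by
      intro w hwm
      obtain ⟨t, c, htm, ht0, ht1, hcell⟩ := hwm
      set g : ℝ → ℝ := fun x => (inner ℝ (w x - β₂) Δ : ℝ) / ‖Δ‖ ^ 2 with hgdef
      have hgmem : g ∈ stepClass M := by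
        refine ⟨t, fun i => (inner ℝ (c i - β₂) Δ : ℝ) / ‖Δ‖ ^ 2, htm, ht0, ht1, ?_⟩
        intro i x hx
        show (inner ℝ (w x - β₂) Δ : ℝ) / ‖Δ‖ ^ 2 = (inner ℝ (c i - β₂) Δ : ℝ) / ‖Δ‖ ^ 2
        rw [hcell i x hx]
      have hpt : ∀ x : ℝ, ‖Δ‖ ^ 2 * (αs x - g x) ^ 2 ≤ ‖wstar x - w x‖ ^ 2 := by
        intro x
        have hinner : (inner ℝ (wstar x - w x) Δ : ℝ) = ‖Δ‖ ^ 2 * (αs x - g x) := by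
          have hgx : g x * ‖Δ‖ ^ 2 = (inner ℝ (w x - β₂) Δ : ℝ) := by
            rw [hgdef]
            field_simp
          have hv : wstar x - w x = αs x • Δ - (w x - β₂) := by
            rw [hw]; abel
          rw [hv, inner_sub_left, real_inner_smul_left, real_inner_self_eq_norm_sq, ← hgx]
          ring
        have hcs : (inner ℝ (wstar x - w x) Δ : ℝ) ^ 2 ≤ ‖wstar x - w x‖ ^ 2 * ‖Δ‖ ^ 2 := by
          have habs := abs_real_inner_le_norm (wstar x - w x) Δ
          calc (inner ℝ (wstar x - w x) Δ : ℝ) ^ 2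
              = |(inner ℝ (wstar x - w x) Δ : ℝ)| ^ 2 := (sq_abs _).symm
            _ ≤ (‖wstar x - w x‖ * ‖Δ‖) ^ 2 := pow_le_pow_left₀ (abs_nonneg _) habs 2
            _ = ‖wstar x - w x‖ ^ 2 * ‖Δ‖ ^ 2 := by ring
        rw [hinner] at hcs
        nlinarith [hcs, hpos, sq_nonneg (αs x - g x)]
      have hint : Integrable (fun x => ‖wstar x - w x‖ ^ 2)
          (volume.restrict (Set.Icc (0:ℝ) 1)) :=
        integrable_hard t c htm ht0 ht1 w hcell β₂ Δ αs hαmeas hα01 wstar hw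
      have hle : ‖Δ‖ ^ 2 * G g ≤ F w := by
        rw [hF, hG]
        rw [← integral_const_mul]
        refine integral_mono_of_nonneg ?_ hint ?_
        · filter_upwards with x
          positivity
        · filter_upwards with x
          exact hpt x
      calc ‖Δ‖ ^ 2 * sInf (G '' stepClass M) ≤ ‖Δ‖ ^ 2 * G g :=
            mul_le_mul_of_nonneg_left (csInf_le hTbdd ⟨g, hgmem, rfl⟩) (le_of_lt hpos)
        _ ≤ F w := hle
    refine le_antisymm ?_ ?_
    · have hdiv : sInf (F '' hardClass J M) / ‖Δ‖ ^ 2 ≤ sInf (G '' stepClass M) := by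
        refine le_csInf hTne ?_
        rintro v ⟨g, hg, rfl⟩
        rw [div_le_iff₀ hpos, mul_comm]
        exact key1 g hg
      calc sInf (F '' hardClass J M)
          = sInf (F '' hardClass J M) / ‖Δ‖ ^ 2 * ‖Δ‖ ^ 2 := by field_simp
        _ ≤ sInf (G '' stepClass M) * ‖Δ‖ ^ 2 :=
            mul_le_mul_of_nonneg_right hdiv (le_of_lt hpos)
        _ = ‖Δ‖ ^ 2 * sInf (G '' stepClass M) := mul_comm _ _
    · refine le_csInf hSne ?_
      rintro v ⟨w, hwm, rfl⟩
      exact key2 w hwm
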